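/- Let f : ℝ^{m×n} → ℝ have λ-Lipschitz gradient, let V ∈ ℝ^{n×k} have orthonormal columns, let X ∈ {L Vᵀ : L ∈ ℝ^{m×k}}, and let X₊ minimize f over this subspace T_V. Then f(X) − f(X₊) ≥ (1/(2λ))‖∇f(X)VVᵀ‖_F². -/

import Mathlib

open Matrix

/-- Frobenius inner product of two real matrices. -/
def frobInner {m n : ℕ} (A B : Matrix (Fin m) (Fin n) ℝ) : ℝ := ∑ i, ∑ j, A i j * B i j

/-- Frobenius norm of a real matrix. -/
noncomputable def frobNorm {m n : ℕ} (A : Matrix (Fin m) (Fin n) ℝ) : ℝ :=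
  Real.sqrt (frobInner A A)

/-- Spectral norm (largest singular value) of a real matrix, as the operator norm
of the induced linear map between Euclidean spaces. -/
noncomputable def specNorm {m n : ℕ} (A : Matrix (Fin m) (Fin n) ℝ) : ℝ :=
  ‖LinearMap.toContinuousLinearMap (Matrix.toEuclideanLin A)‖
attribute [local instance] Matrix.frobeniusNormedAddCommGroup Matrix.frobeniusNormedSpace

/-- The continuous linear functional `H ↦ ⟨A, H⟩_F`; `HasFDerivAt f (frobInnerCLM (Gf X)) X`
expresses that `Gf X` is the (Frobenius) gradient of `f` at `X`. -/
noncomputable def frobInnerCLM {m n : ℕ} (A : Matrix (Fin m) (Fin n) ℝ) :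
    Matrix (Fin m) (Fin n) ℝ →L[ℝ] ℝ :=
  LinearMap.toContinuousLinearMap
    { toFun := fun H => frobInner A H
      map_add' := by intro H K; simp [frobInner, mul_add, Finset.sum_add_distrib]
      map_smul' := by intro c H; simp [frobInner, Finset.mul_sum, mul_left_comm] }

lemma frobInner_self_nonneg {m n : ℕ} (A : Matrix (Fin m) (Fin n) ℝ) : 0 ≤ frobInner A A :=
  Finset.sum_nonneg fun _ _ => Finset.sum_nonneg fun _ _ => mul_self_nonneg _

lemma frobNorm_sq {m n : ℕ} (A : Matrix (Fin m) (Fin n) ℝ) :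
    frobNorm A ^ 2 = frobInner A A :=
  Real.sq_sqrt (frobInner_self_nonneg A)

lemma frobInner_prod {m n : ℕ} (A B : Matrix (Fin m) (Fin n) ℝ) :
    frobInner A B = ∑ p : Fin m × Fin n, A p.1 p.2 * B p.1 p.2 := by
  rw [frobInner, Fintype.sum_prod_type]

lemma frobInner_le {m n : ℕ} (A B : Matrix (Fin m) (Fin n) ℝ) :
    frobInner A B ≤ frobNorm A * frobNorm B := by
  have h := Finset.sum_mul_sq_le_sq_mul_sq Finset.univ (fun p : Fin m × Fin n => A p.1 p.2)
    (fun p => B p.1 p.2)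
  have h2 : frobInner A B ^ 2 ≤ frobInner A A * frobInner B B := by
    rw [frobInner_prod, frobInner_prod, frobInner_prod]
    calc (∑ p : Fin m × Fin n, A p.1 p.2 * B p.1 p.2) ^ 2
        ≤ (∑ p : Fin m × Fin n, A p.1 p.2 ^ 2) * ∑ p : Fin m × Fin n, B p.1 p.2 ^ 2 := h
      _ = _ := by simp [sq]
  calc frobInner A B ≤ |frobInner A B| := le_abs_self _
    _ = Real.sqrt (frobInner A B ^ 2) := (Real.sqrt_sq_eq_abs _).symm
    _ ≤ Real.sqrt (frobInner A A * frobInner B B) := Real.sqrt_le_sqrt h2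
    _ = frobNorm A * frobNorm B := Real.sqrt_mul (frobInner_self_nonneg A) _

lemma frobNorm_smul {m n : ℕ} (c : ℝ) (A : Matrix (Fin m) (Fin n) ℝ) :
    frobNorm (c • A) = |c| * frobNorm A := by
  have : frobInner (c • A) (c • A) = c ^ 2 * frobInner A A := by
    simp only [frobInner, Matrix.smul_apply, smul_eq_mul, Finset.mul_sum]
    apply Finset.sum_congr rfl; intros; apply Finset.sum_congr rfl; intros; ring
  rw [frobNorm, this, Real.sqrt_mul (sq_nonneg c), Real.sqrt_sq_eq_abs, frobNorm]

lemma frobInner_sub_left {m n : ℕ} (A B C : Matrix (Fin m) (Fin n) ℝ) :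
    frobInner (A - B) C = frobInner A C - frobInner B C := by
  simp [frobInner, sub_mul, Finset.sum_sub_distrib]

lemma frobInner_smul_right {m n : ℕ} (c : ℝ) (A B : Matrix (Fin m) (Fin n) ℝ) :
    frobInner A (c • B) = c * frobInner A B := by
  simp [frobInner, Finset.mul_sum, mul_left_comm]

lemma frobInner_eq_trace {m n : ℕ} (A B : Matrix (Fin m) (Fin n) ℝ) :
    frobInner A B = (Aᵀ * B).trace := by
  simp only [Matrix.trace, Matrix.diag, Matrix.mul_apply, Matrix.transpose_apply]
  rw [frobInner, Finset.sum_comm]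

lemma frobInner_proj {m n k : ℕ} (G : Matrix (Fin m) (Fin n) ℝ) (V : Matrix (Fin n) (Fin k) ℝ)
    (hV : Vᵀ * V = 1) : frobInner G (G * V * Vᵀ) = frobInner (G * V * Vᵀ) (G * V * Vᵀ) := by
  rw [frobInner_eq_trace, frobInner_eq_trace]
  have h1 : (G * V * Vᵀ)ᵀ * (G * V * Vᵀ) = V * (Vᵀ * (Gᵀ * (G * V))) * Vᵀ := by
    simp only [Matrix.transpose_mul, Matrix.transpose_transpose, Matrix.mul_assoc]
  have h2 : Gᵀ * (G * V * Vᵀ) = Gᵀ * (G * V) * Vᵀ := by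
    simp only [Matrix.mul_assoc]
  rw [h1, h2, Matrix.trace_mul_comm, Matrix.trace_mul_comm _ Vᵀ,
    ← Matrix.mul_assoc Vᵀ V, hV, Matrix.one_mul]

lemma descent {m n : ℕ} (f : Matrix (Fin m) (Fin n) ℝ → ℝ)
    (Gf : Matrix (Fin m) (Fin n) ℝ → Matrix (Fin m) (Fin n) ℝ)
    (hgrad : ∀ X, HasFDerivAt f (frobInnerCLM (Gf X)) X)
    (lam : ℝ) (hlam : 0 < lam)
    (hLip : ∀ X Y, frobNorm (Gf X - Gf Y) ≤ lam * frobNorm (X - Y))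
    (X D : Matrix (Fin m) (Fin n) ℝ) :
    f (X + D) ≤ f X + frobInner (Gf X) D + lam / 2 * frobNorm D ^ 2 := by
  set g : ℝ → ℝ := fun t =>
    f (X + t • D) - t * frobInner (Gf X) D - lam * t ^ 2 / 2 * frobNorm D ^ 2 with hgdef
  have hc : ∀ t : ℝ, HasDerivAt (fun s : ℝ => X + s • D) D t := fun t => by
    have h := ((hasDerivAt_id' t).smul_const D).const_add X
    simp only [one_smul] at h
    exact h
  have hg : ∀ t : ℝ, HasDerivAt g
      (frobInner (Gf (X + t • D)) D - frobInner (Gf X) D - lam * t * frobNorm D ^ 2) t := by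
    intro t
    have h1 : HasDerivAt (fun s : ℝ => f (X + s • D)) (frobInnerCLM (Gf (X + t • D)) D) t :=
      (hgrad _).comp_hasDerivAt t (hc t)
    have h2 : HasDerivAt (fun s : ℝ => s * frobInner (Gf X) D) (frobInner (Gf X) D) t := by
      simpa using (hasDerivAt_id t).mul_const (frobInner (Gf X) D)
    have h3 : HasDerivAt (fun s : ℝ => lam * s ^ 2 / 2 * frobNorm D ^ 2)
        (lam * t * frobNorm D ^ 2) t := by
      have := (((hasDerivAt_pow 2 t).const_mul lam).div_const 2).mul_const (frobNorm D ^ 2)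
      refine this.congr_deriv ?_; rw [show (2:ℕ) - 1 = 1 from rfl]; push_cast; ring
    have := (h1.sub h2).sub h3
    exact this
  have hanti : AntitoneOn g (Set.Icc (0:ℝ) 1) := by
    apply antitoneOn_of_deriv_nonpos (convex_Icc 0 1)
    · exact fun t _ => ((hg t).continuousAt).continuousWithinAt
    · exact fun t _ => ((hg t).differentiableAt).differentiableWithinAt
    · intro t ht
      rw [interior_Icc] at ht
      rw [(hg t).deriv]
      have key : frobInner (Gf (X + t • D)) D - frobInner (Gf X) D
          ≤ lam * t * frobNorm D ^ 2 := by
        calc frobInner (Gf (X + t • D)) D - frobInner (Gf X) D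
            = frobInner (Gf (X + t • D) - Gf X) D := (frobInner_sub_left _ _ _).symm
          _ ≤ frobNorm (Gf (X + t • D) - Gf X) * frobNorm D := frobInner_le _ _
          _ ≤ (lam * frobNorm (X + t • D - X)) * frobNorm D := by
              apply mul_le_mul_of_nonneg_right (hLip _ _)
              exact Real.sqrt_nonneg _
          _ = lam * t * frobNorm D ^ 2 := by
              rw [add_sub_cancel_left, frobNorm_smul, abs_of_pos ht.1]; ring
      linarith
  have h01 : g 1 ≤ g 0 := hanti (Set.mem_Icc.2 ⟨le_rfl, zero_le_one⟩)
    (Set.mem_Icc.2 ⟨zero_le_one, le_rfl⟩) zero_le_one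
  simp only [hgdef, one_smul, one_pow, zero_smul, add_zero, zero_mul, one_mul] at h01
  nlinarith [h01]

/-- **Decrease of an exact (ALS) half-step.** If `f` has `lam`-Lipschitz gradient `Gf`,
`V` has orthonormal columns, `X ∈ T_V = {L Vᵀ}`, and `Xp` minimizes `f` over `T_V`,
then `f X - f Xp ≥ (1/(2 lam)) ‖Gf X · V Vᵀ‖_F²`. -/
theorem half_step_decrease
    {m n k : ℕ} (f : Matrix (Fin m) (Fin n) ℝ → ℝ)
    (Gf : Matrix (Fin m) (Fin n) ℝ → Matrix (Fin m) (Fin n) ℝ)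
    (hgrad : ∀ X, HasFDerivAt f (frobInnerCLM (Gf X)) X)
    (lam : ℝ) (hlam : 0 < lam)
    (hLip : ∀ X Y, frobNorm (Gf X - Gf Y) ≤ lam * frobNorm (X - Y))
    (V : Matrix (Fin n) (Fin k) ℝ) (hV : Vᵀ * V = 1)
    (X Xp : Matrix (Fin m) (Fin n) ℝ)
    (hX : ∃ L : Matrix (Fin m) (Fin k) ℝ, X = L * Vᵀ)
    (hXp : ∃ L : Matrix (Fin m) (Fin k) ℝ, Xp = L * Vᵀ)
    (hmin : ∀ L : Matrix (Fin m) (Fin k) ℝ, f Xp ≤ f (L * Vᵀ)) :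
    f X - f Xp ≥ 1 / (2 * lam) * frobNorm (Gf X * V * Vᵀ) ^ 2 := by
  obtain ⟨L, rfl⟩ := hX
  set G := Gf (L * Vᵀ) with hG
  set P := G * V * Vᵀ with hP
  set c : ℝ := -(1 / lam) with hc
  have hstep : L * Vᵀ + c • P = (L + c • (G * V)) * Vᵀ := by
    rw [Matrix.add_mul, hP, Matrix.smul_mul, Matrix.mul_assoc]
  have h1 : f Xp ≤ f (L * Vᵀ + c • P) := by rw [hstep]; exact hmin _
  have h2 := descent f Gf hgrad lam hlam hLip (L * Vᵀ) (c • P)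
  have h3 : frobInner G (c • P) = c * frobNorm P ^ 2 := by
    rw [frobInner_smul_right, hP, frobInner_proj G V hV, ← frobNorm_sq]
  have h4 : frobNorm (c • P) ^ 2 = c ^ 2 * frobNorm P ^ 2 := by
    rw [frobNorm_smul, mul_pow, sq_abs]
  rw [h3, h4] at h2
  have hlam' : lam ≠ 0 := ne_of_gt hlam
  have hcval : c = -(1 / lam) := hc
  have : f Xp ≤ f (L * Vᵀ) - 1 / (2 * lam) * frobNorm P ^ 2 := by
    calc f Xp ≤ f (L * Vᵀ + c • P) := h1
      _ ≤ f (L * Vᵀ) + c * frobNorm P ^ 2 + lam / 2 * (c ^ 2 * frobNorm P ^ 2) := h2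
      _ = f (L * Vᵀ) - 1 / (2 * lam) * frobNorm P ^ 2 := by
          rw [hcval]; field_simp; ring
  linarith
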